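/- Let m be an integer with m < n. If there exists a basis a ∈ PB of the integer polymatroid P with internal activity ι(a) = m, then there also exists a basis b ∈ PB with internal activity ι(b) = m + 1. -/

import Mathlib

open Finset

variable {n : ℕ}

/-- The set of bases of the integer polymatroid with rank function `f` on ground set `Fin n`:
integer vectors `a` with `a i ≥ 0`, `∑_{i ∈ I} a i ≤ f I` for every `I`, and `∑ i, a i = f [n]`.
(The upper bound `a i ≤ f {i}` used for the ambient finite set is implied by the constraints.) -/
noncomputable def PB (n : ℕ) (f : Finset (Fin n) → ℕ) : Finset (Fin n → ℤ) :=
  (Fintype.piFinset fun i : Fin n => Finset.Icc (0 : ℤ) (f {i})).filter fun a =>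
    (∀ I : Finset (Fin n), ∑ j ∈ I, a j ≤ (f I : ℤ)) ∧ ∑ j, a j = (f Finset.univ : ℤ)

/-- A set `I` is tight for `a` if `∑_{i ∈ I} a i = f I`. -/
def Tight (f : Finset (Fin n) → ℕ) (a : Fin n → ℤ) (I : Finset (Fin n)) : Prop :=
  ∑ i ∈ I, a i = (f I : ℤ)

/-- `i` is internally active with respect to `a`: `a - e_i + e_j ∉ PB` for every `j < i`. -/
def IntAct (f : Finset (Fin n) → ℕ) (a : Fin n → ℤ) (i : Fin n) : Prop :=
  ∀ j : Fin n, j < i → a - Pi.single i 1 + Pi.single j 1 ∉ PB n f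

/-- `i` is externally active with respect to `a`: `a + e_i - e_j ∉ PB` for every `j < i`. -/
def ExtAct (f : Finset (Fin n) → ℕ) (a : Fin n → ℤ) (i : Fin n) : Prop :=
  ∀ j : Fin n, j < i → a + Pi.single i 1 - Pi.single j 1 ∉ PB n f

open scoped Classical in
/-- `Int(a)`: the set of internally active indices. -/
noncomputable def IntSet (f : Finset (Fin n) → ℕ) (a : Fin n → ℤ) : Finset (Fin n) :=
  Finset.univ.filter fun i => IntAct f a i

open scoped Classical in
/-- `Ext(a)`: the set of externally active indices. -/
noncomputable def ExtSet (f : Finset (Fin n) → ℕ) (a : Fin n → ℤ) : Finset (Fin n) :=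
  Finset.univ.filter fun i => ExtAct f a i

/-- `ι(a) = |Int(a)|`, the internal activity. -/
noncomputable def iota (f : Finset (Fin n) → ℕ) (a : Fin n → ℤ) : ℕ := (IntSet f a).card

/-- `ε(a) = |Ext(a)|`, the external activity. -/
noncomputable def eps (f : Finset (Fin n) → ℕ) (a : Fin n → ℤ) : ℕ := (ExtSet f a).card

/- ### Auxiliary lemmas -/

lemma mem_PB_iff (f : Finset (Fin n) → ℕ) (x : Fin n → ℤ) :
    x ∈ PB n f ↔ (∀ i, 0 ≤ x i) ∧ (∀ I : Finset (Fin n), ∑ j ∈ I, x j ≤ (f I : ℤ)) ∧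
      ∑ j, x j = (f Finset.univ : ℤ) := by
  unfold PB
  rw [Finset.mem_filter, Fintype.mem_piFinset]
  simp only [Finset.mem_Icc]
  constructor
  · rintro ⟨h1, h2, h3⟩
    exact ⟨fun i => (h1 i).1, h2, h3⟩
  · rintro ⟨h1, h2, h3⟩
    refine ⟨fun i => ⟨h1 i, ?_⟩, h2, h3⟩
    have := h2 {i}
    simpa using this

lemma sum_move (a : Fin n → ℤ) (k l : Fin n) (I : Finset (Fin n)) :
    ∑ j ∈ I, ((a - Pi.single k 1 + Pi.single l 1 : Fin n → ℤ)) j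
      = ∑ j ∈ I, a j - (if k ∈ I then 1 else 0) + (if l ∈ I then 1 else 0) := by
  simp only [Pi.add_apply, Pi.sub_apply, Finset.sum_add_distrib, Finset.sum_sub_distrib,
    Pi.single_apply, Finset.sum_ite_eq']

lemma move_mem_iff (f : Finset (Fin n) → ℕ) (a : Fin n → ℤ) (ha : a ∈ PB n f)
    (k l : Fin n) (hkl : k ≠ l) :
    a - Pi.single k 1 + Pi.single l 1 ∈ PB n f ↔
      1 ≤ a k ∧ ∀ I : Finset (Fin n), l ∈ I → k ∉ I → ∑ j ∈ I, a j + 1 ≤ (f I : ℤ) := by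
  obtain ⟨ha0, haI, haU⟩ := (mem_PB_iff f a).mp ha
  constructor
  · intro hmem
    obtain ⟨h0, hI, _⟩ := (mem_PB_iff f (a - Pi.single k 1 + Pi.single l 1)).mp hmem
    constructor
    · have := h0 k
      simp [Pi.single_apply, hkl] at this
      omega
    · intro I hlI hkI
      have := hI I
      rw [sum_move] at this
      simp [hlI, hkI] at this
      omega
  · rintro ⟨hak, hmain⟩
    rw [mem_PB_iff]
    refine ⟨?_, ?_, ?_⟩
    · intro i
      have h0 := ha0 i
      have h0k := ha0 k
      have h0l := ha0 l
      by_cases hik : i = k <;> by_cases hil : i = l <;>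
        simp [Pi.single_apply, hik, hil, hkl] <;> omega
    · intro I
      rw [sum_move]
      have hfeas := haI I
      by_cases hk : k ∈ I <;> by_cases hl : l ∈ I <;> simp [hk, hl] <;>
        first
          | omega
          | (have := hmain I hl hk; omega)
    · rw [sum_move]
      simp only [Finset.mem_univ, if_true]
      omega

lemma uncross (f : Finset (Fin n) → ℕ)
    (hsub : ∀ I J : Finset (Fin n), f (I ∪ J) + f (I ∩ J) ≤ f I + f J)
    (a : Fin n → ℤ) (ha : a ∈ PB n f) (S T : Finset (Fin n))
    (h : (f S : ℤ) + (f T : ℤ) ≤ ∑ j ∈ S, a j + ∑ j ∈ T, a j + 1) :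
    (∑ j ∈ S ∪ T, a j = (f (S ∪ T) : ℤ)) ∨ (∑ j ∈ S ∩ T, a j = (f (S ∩ T) : ℤ)) := by
  have h1 := ((mem_PB_iff f a).mp ha).2.1 (S ∪ T)
  have h2 := ((mem_PB_iff f a).mp ha).2.1 (S ∩ T)
  have h3 : ∑ j ∈ S ∪ T, a j + ∑ j ∈ S ∩ T, a j = ∑ j ∈ S, a j + ∑ j ∈ T, a j :=
    Finset.sum_union_inter
  have h4 : ((f (S ∪ T) : ℤ) + (f (S ∩ T) : ℤ)) ≤ (f S : ℤ) + (f T : ℤ) := by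
    exact_mod_cast hsub S T
  omega

/-- The key exchange lemma: if `(j0, i0)` is the lexicographically smallest feasible
transfer pair for `a`, and `k ≠ i0` is internally inactive for `a`, then `k` is
internally inactive for `b = a - e_{i0} + e_{j0}`. -/
lemma key_lemma (f : Finset (Fin n) → ℕ)
    (hsub : ∀ I J : Finset (Fin n), f (I ∪ J) + f (I ∩ J) ≤ f I + f J)
    (a : Fin n → ℤ) (ha : a ∈ PB n f) (j0 i0 : Fin n) (hji : j0 < i0)
    (hb : a - Pi.single i0 1 + Pi.single j0 1 ∈ PB n f)
    (hminj : ∀ j i : Fin n, j < i → a - Pi.single i 1 + Pi.single j 1 ∈ PB n f → j0 ≤ j)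
    (hmini : ∀ i : Fin n, j0 < i → a - Pi.single i 1 + Pi.single j0 1 ∈ PB n f → i0 ≤ i)
    (k : Fin n) (hki : k ≠ i0) (l : Fin n) (hlk : l < k)
    (hfl : a - Pi.single k 1 + Pi.single l 1 ∈ PB n f) :
    ∃ l' : Fin n, l' < k ∧
      (a - Pi.single i0 1 + Pi.single j0 1) - Pi.single k 1 + Pi.single l' 1 ∈ PB n f := by
  classical
  obtain ⟨ha0, haI, haU⟩ := (mem_PB_iff f a).mp ha
  set b := a - Pi.single i0 1 + Pi.single j0 1 with hbdef
  obtain ⟨hak, Hl⟩ := (move_mem_iff f a ha k l hlk.ne').mp hfl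
  obtain ⟨hai0, Hji⟩ := (move_mem_iff f a ha i0 j0 hji.ne').mp hb
  have hkj : k ≠ j0 := by
    intro h
    have hle := hminj l k hlk hfl
    rw [h] at hlk
    exact absurd hlk (not_lt.mpr hle)
  have hbk : b k = a k := by
    rw [hbdef]
    simp [Pi.single_apply, hki, hkj]
  have hsumb : ∀ I : Finset (Fin n), ∑ j ∈ I, b j
      = ∑ j ∈ I, a j - (if i0 ∈ I then 1 else 0) + (if j0 ∈ I then 1 else 0) := by
    intro I
    rw [hbdef]
    exact sum_move a i0 j0 I
  by_cases hdone : b - Pi.single k 1 + Pi.single l 1 ∈ PB n f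
  · exact ⟨l, hlk, hdone⟩
  rw [move_mem_iff f b hb k l hlk.ne'] at hdone
  push_neg at hdone
  obtain ⟨T, hlT, hkT, hTgt⟩ := hdone (by omega)
  have hbT := ((mem_PB_iff f b).mp hb).2.1 T
  have hsmT := hsumb T
  have haT := haI T
  -- Derive: j0 ∈ T, i0 ∉ T, and ∑_T a + 1 = f T
  have hT : j0 ∈ T ∧ i0 ∉ T ∧ ∑ j ∈ T, a j + 1 = (f T : ℤ) := by
    by_cases hi : i0 ∈ T <;> by_cases hj : j0 ∈ T <;> simp [hi, hj] at hsmT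
    · have := Hl T hlT hkT; omega
    · omega
    · refine ⟨hj, hi, ?_⟩; omega
    · have := Hl T hlT hkT; omega
  obtain ⟨hj0T, hi0T, hTeq⟩ := hT
  -- Show i0 < k
  have hik : i0 < k := by
    rcases hki.lt_or_gt with h1 | h2
    · exfalso
      have hlj0 : l ≠ j0 := by
        intro h
        rw [h] at hfl hlk
        exact absurd (hmini k hlk hfl) (not_le.mpr h1)
      have hj0l : j0 < l := lt_of_le_of_ne (hminj l k hlk hfl) (Ne.symm hlj0)
      have hj0k : j0 < k := hj0l.trans hlk
      have hnf : a - Pi.single k 1 + Pi.single j0 1 ∉ PB n f := by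
        intro hmem
        exact absurd (hmini k hj0k hmem) (not_le.mpr h1)
      rw [move_mem_iff f a ha k j0 hkj] at hnf
      push_neg at hnf
      obtain ⟨S, hj0S, hkS, hSgt⟩ := hnf hak
      have haS := haI S
      have hSeq : ∑ j ∈ S, a j = (f S : ℤ) := by omega
      have hi0S : i0 ∈ S := by
        by_contra h
        have := Hji S hj0S h
        omega
      rcases uncross f hsub a ha S T (by omega) with hU | hI
      · have := Hl (S ∪ T) (Finset.mem_union_right S hlT)
          (by simp [hkS, hkT])
        omega
      · have := Hji (S ∩ T) (Finset.mem_inter.mpr ⟨hj0S, hj0T⟩)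
          (fun h => hi0T (Finset.mem_inter.mp h).2)
        omega
    · exact h2
  -- The witness is i0
  refine ⟨i0, hik, ?_⟩
  rw [move_mem_iff f b hb k i0 hki]
  refine ⟨by omega, ?_⟩
  intro I hi0I hkI
  have hsmI := hsumb I
  have haI' := haI I
  by_cases hj0I : j0 ∈ I
  · simp [hi0I, hj0I] at hsmI
    by_contra hc
    push_neg at hc
    have hIeq : ∑ j ∈ I, a j = (f I : ℤ) := by omega
    rcases uncross f hsub a ha I T (by omega) with hU | hI2
    · have := Hl (I ∪ T) (Finset.mem_union_right I hlT) (by simp [hkI, hkT])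
      omega
    · have := Hji (I ∩ T) (Finset.mem_inter.mpr ⟨hj0I, hj0T⟩)
        (fun h => hi0T (Finset.mem_inter.mp h).2)
      omega
  · simp [hi0I, hj0I] at hsmI
    omega

/-- If some basis has internal activity `m < n`, then some basis has internal
activity `m + 1`. -/
theorem exists_basis_internal_activity_succ
    (n : ℕ) (hn : 0 < n) (f : Finset (Fin n) → ℕ)
    (hf0 : f ∅ = 0)
    (hmono : ∀ I J : Finset (Fin n), I ⊆ J → f I ≤ f J)
    (hsub : ∀ I J : Finset (Fin n), f (I ∪ J) + f (I ∩ J) ≤ f I + f J)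
    (m : ℕ) (hm : m < n)
    (hex : ∃ a ∈ PB n f, iota f a = m) :
    ∃ b ∈ PB n f, iota f b = m + 1 := by
  classical
  obtain ⟨a0, ha0PB, ha0i⟩ := hex
  -- one exchange step: decreases the potential, increases iota by at most one
  have hstep : ∀ a, a ∈ PB n f → iota f a ≤ m →
      ∃ b, b ∈ PB n f ∧ iota f b ≤ m + 1 ∧
        (∑ i, (i.val : ℤ) * b i).toNat < (∑ i, (i.val : ℤ) * a i).toNat := by
    intro a ha hio
    -- there is an inactive index
    have hlt : (IntSet f a).card < n := lt_of_le_of_lt hio hm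
    have hex2 : ∃ i : Fin n, ¬ IntAct f a i := by
      by_contra hno
      push_neg at hno
      have huniv : IntSet f a = Finset.univ := by
        apply Finset.eq_univ_iff_forall.mpr
        intro i
        simp only [IntSet, Finset.mem_filter, Finset.mem_univ, true_and]
        exact hno i
      rw [huniv] at hlt
      simp at hlt
    obtain ⟨i1, hi1⟩ := hex2
    simp only [IntAct] at hi1
    push_neg at hi1
    obtain ⟨j1, hj1lt, hj1mem⟩ := hi1
    -- lexicographically smallest feasible pair
    have hJne : (Finset.univ.filter
        (fun j => ∃ i : Fin n, j < i ∧ a - Pi.single i 1 + Pi.single j 1 ∈ PB n f)).Nonempty :=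
      ⟨j1, by
        simp only [Finset.mem_filter, Finset.mem_univ, true_and]
        exact ⟨i1, hj1lt, hj1mem⟩⟩
    set j0 := (Finset.univ.filter
      (fun j => ∃ i : Fin n, j < i ∧ a - Pi.single i 1 + Pi.single j 1 ∈ PB n f)).min' hJne
      with hj0def
    have hj0J : j0 ∈ Finset.univ.filter
        (fun j => ∃ i : Fin n, j < i ∧ a - Pi.single i 1 + Pi.single j 1 ∈ PB n f) := by
      rw [hj0def]; exact Finset.min'_mem _ _
    rw [Finset.mem_filter] at hj0J
    obtain ⟨-, i2, hi2lt, hi2mem⟩ := hj0J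
    have hI'ne : (Finset.univ.filter
        (fun i => j0 < i ∧ a - Pi.single i 1 + Pi.single j0 1 ∈ PB n f)).Nonempty :=
      ⟨i2, by
        simp only [Finset.mem_filter, Finset.mem_univ, true_and]
        exact ⟨hi2lt, hi2mem⟩⟩
    set i0 := (Finset.univ.filter
      (fun i => j0 < i ∧ a - Pi.single i 1 + Pi.single j0 1 ∈ PB n f)).min' hI'ne
      with hi0def
    have hi0I' : i0 ∈ Finset.univ.filter
        (fun i => j0 < i ∧ a - Pi.single i 1 + Pi.single j0 1 ∈ PB n f) := by
      rw [hi0def]; exact Finset.min'_mem _ _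
    rw [Finset.mem_filter] at hi0I'
    obtain ⟨-, hji, hbPB⟩ := hi0I'
    have hminj : ∀ j i : Fin n, j < i → a - Pi.single i 1 + Pi.single j 1 ∈ PB n f → j0 ≤ j := by
      intro j i h1 h2
      rw [hj0def]
      exact Finset.min'_le _ j (by
        simp only [Finset.mem_filter, Finset.mem_univ, true_and]
        exact ⟨i, h1, h2⟩)
    have hmini : ∀ i : Fin n, j0 < i → a - Pi.single i 1 + Pi.single j0 1 ∈ PB n f → i0 ≤ i := by
      intro i h1 h2
      rw [hi0def]
      exact Finset.min'_le _ i (by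
        simp only [Finset.mem_filter, Finset.mem_univ, true_and]
        exact ⟨h1, h2⟩)
    set b := a - Pi.single i0 1 + Pi.single j0 1 with hbdef
    refine ⟨b, hbPB, ?_, ?_⟩
    · -- iota f b ≤ m + 1
      have hsub2 : IntSet f b ⊆ insert i0 (IntSet f a) := by
        intro k hk
        by_contra hkn
        simp only [Finset.mem_insert, not_or] at hkn
        obtain ⟨hki, hkA⟩ := hkn
        have hkinact : ¬ IntAct f a k := by
          intro h
          exact hkA (by simp only [IntSet, Finset.mem_filter, Finset.mem_univ, true_and]; exact h)
        simp only [IntAct] at hkinact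
        push_neg at hkinact
        obtain ⟨l, hlk, hfl⟩ := hkinact
        obtain ⟨l', hl'k, hmem⟩ :=
          key_lemma f hsub a ha j0 i0 hji hbPB hminj hmini k hki l hlk hfl
        have hact : IntAct f b k := by
          simp only [IntSet, Finset.mem_filter, Finset.mem_univ, true_and] at hk
          exact hk
        exact hact l' hl'k hmem
      have hc1 := Finset.card_le_card hsub2
      have hc2 := Finset.card_insert_le i0 (IntSet f a)
      simp only [iota] at hio ⊢
      omega
    · -- potential decreases
      have hsingle : ∀ c : Fin n, ∑ i : Fin n, (i.val : ℤ) * (Pi.single c 1 : Fin n → ℤ) i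
          = (c.val : ℤ) := by
        intro c
        simp [Pi.single_apply, mul_ite, Finset.sum_ite_eq']
      have hpsib : ∑ i, (i.val : ℤ) * b i
          = ∑ i, (i.val : ℤ) * a i - (i0.val : ℤ) + (j0.val : ℤ) := by
        rw [hbdef]
        simp only [Pi.add_apply, Pi.sub_apply, mul_sub, mul_add,
          Finset.sum_sub_distrib, Finset.sum_add_distrib, hsingle]
      have h0b : 0 ≤ ∑ i, (i.val : ℤ) * b i :=
        Finset.sum_nonneg fun i _ => mul_nonneg (Int.natCast_nonneg _)
          (((mem_PB_iff f b).mp hbPB).1 i)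
      have hvl : (j0.val : ℤ) < (i0.val : ℤ) := by
        have : (j0 : ℕ) < (i0 : ℕ) := hji
        exact_mod_cast this
      omega
  -- induction on the potential
  have main : ∀ N : ℕ, ∀ a, a ∈ PB n f → (∑ i, (i.val : ℤ) * a i).toNat ≤ N →
      iota f a ≤ m + 1 → ∃ b ∈ PB n f, iota f b = m + 1 := by
    intro N
    induction N with
    | zero =>
      intro a ha hN hi
      rcases eq_or_lt_of_le hi with he | hl
      · exact ⟨a, ha, he⟩
      · obtain ⟨b, hb1, hb2, hb3⟩ := hstep a ha (by omega)
        exact absurd hb3 (by omega)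
    | succ N ih =>
      intro a ha hN hi
      rcases eq_or_lt_of_le hi with he | hl
      · exact ⟨a, ha, he⟩
      · obtain ⟨b, hb1, hb2, hb3⟩ := hstep a ha (by omega)
        exact ih b hb1 (by omega) hb2
  exact main _ a0 ha0PB le_rfl (by omega)
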